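/- Let X be a random vector and suppose a square-integrable function T of X admits two decompositions T(X) = Σ_{J ⊆ S} ν^{(J)}(X^{(J)}) = Σ_{J ⊆ S} μ^{(J)}(X^{(J)}) over the same finite index family, where both families satisfy the hierarchical orthogonality constraints E[ν^{(J)}(X^{(J)}) | X^{(I)}] = 0 and E[μ^{(J)}(X^{(J)}) | X^{(I)}] = 0 for all I ⊊ J. If the density of X on [0,1]^p is bounded between positive constants, then ν^{(J)}(X^{(J)}) = μ^{(J)}(X^{(J)}) almost surely for every J. -/

import Mathlib

open MeasureTheory Set
open scoped ENNReal NNReal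

namespace Stmt15Aux

noncomputable def unif : Measure ℝ := volume.restrict (Set.Icc 0 1)

instance : IsProbabilityMeasure unif :=
  ⟨by simp [unif, Real.volume_Icc]⟩

noncomputable def rho (p : ℕ) : Measure (Fin p → ℝ) := Measure.pi fun _ => unif

instance (p : ℕ) : IsProbabilityMeasure (rho p) := by unfold rho; infer_instance

lemma rho_eq_restrict (p : ℕ) :
    rho p = volume.restrict (Set.Icc (0 : Fin p → ℝ) 1) := by
  refine Measure.pi_eq fun s hs => ?_
  have h1 : Set.Icc (0 : Fin p → ℝ) 1 = Set.pi univ (fun _ => Set.Icc (0:ℝ) 1) := by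
    rw [Set.pi_univ_Icc]; rfl
  rw [Measure.restrict_apply (MeasurableSet.univ_pi hs), h1, ← Set.pi_inter_distrib,
    volume_pi, Measure.pi_pi]
  exact Finset.prod_congr rfl fun i _ => (Measure.restrict_apply (hs i)).symm

variable {p : ℕ}

def patch (J : Finset (Fin p)) (q : (Fin p → ℝ) × (Fin p → ℝ)) : Fin p → ℝ :=
  fun i => if i ∈ J then q.1 i else q.2 i

lemma measurable_patch (J : Finset (Fin p)) : Measurable (patch J) := by
  apply measurable_pi_lambda
  intro i
  by_cases hi : i ∈ J
  · simp only [patch, hi, if_true, if_false]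
    exact (measurable_pi_apply i).comp measurable_fst
  · simp only [patch, hi, if_true, if_false]
    exact (measurable_pi_apply i).comp measurable_snd

lemma measurePreserving_patch (J : Finset (Fin p)) :
    MeasurePreserving (patch J) ((rho p).prod (rho p)) (rho p) := by
  refine ⟨measurable_patch J, ?_⟩
  refine (Measure.pi_eq fun s hs => ?_).symm
  rw [Measure.map_apply (measurable_patch J) (MeasurableSet.univ_pi hs)]
  have hpre : patch J ⁻¹' (Set.pi univ s) =
      (Set.pi univ fun i => if i ∈ J then s i else univ) ×ˢ
      (Set.pi univ fun i => if i ∈ J then univ else s i) := by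
    ext ⟨x, y⟩
    simp only [mem_preimage, mem_pi, mem_univ, forall_true_left, Set.mem_prod, patch]
    constructor
    · intro h
      constructor <;> intro i <;> by_cases hi : i ∈ J <;> simp [hi] <;> simpa [hi] using h i
    · rintro ⟨h1, h2⟩ i
      by_cases hi : i ∈ J
      · simpa [hi] using h1 i
      · simpa [hi] using h2 i
  rw [hpre, Measure.prod_prod]
  unfold rho
  rw [Measure.pi_pi, Measure.pi_pi, ← Finset.prod_mul_distrib]
  refine Finset.prod_congr rfl fun i _ => ?_
  by_cases hi : i ∈ J <;> simp [hi]

/-- Jensen-type bound: the partial integral of an `L²` function (along a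
measure-preserving two-variable map) is again in `L²`. -/
lemma memLp_two_partial_integral {α : Type*} [MeasurableSpace α] {ρ : Measure α}
    [IsProbabilityMeasure ρ] {φ : α × α → α} (hφ : MeasurePreserving φ (ρ.prod ρ) ρ)
    {h : α → ℝ} (hm : Measurable h) (hL2 : MemLp h 2 ρ) :
    MemLp (fun x => ∫ y, h (φ (x, y)) ∂ρ) 2 ρ := by
  have hFm : Measurable fun q : α × α => h (φ q) := hm.comp hφ.measurable
  have hcm : StronglyMeasurable fun x => ∫ y, h (φ (x, y)) ∂ρ :=
    hFm.stronglyMeasurable.integral_prod_right'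
  refine ⟨hcm.aestronglyMeasurable, ?_⟩
  rw [eLpNorm_eq_lintegral_rpow_enorm_toReal two_ne_zero ENNReal.ofNat_ne_top]; simp only [enorm_eq_nnnorm]
  have htr : (2 : ℝ≥0∞).toReal = (2 : ℝ) := by norm_num
  rw [htr]
  have hconj : Real.HolderConjugate 2 2 := Real.HolderConjugate.two_two
  have hFm2 : Measurable fun q : α × α => (‖h (φ q)‖₊ : ℝ≥0∞) ^ (2 : ℝ) :=
    hFm.nnnorm.coe_nnreal_ennreal.pow measurable_const
  have step1 : ∀ x : α, (‖∫ y, h (φ (x, y)) ∂ρ‖₊ : ℝ≥0∞) ^ (2 : ℝ)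
      ≤ ∫⁻ y, (‖h (φ (x, y))‖₊ : ℝ≥0∞) ^ (2 : ℝ) ∂ρ := by
    intro x
    have hWm : Measurable fun y => (‖h (φ (x, y))‖₊ : ℝ≥0∞) :=
      (hFm.comp measurable_prodMk_left).nnnorm.coe_nnreal_ennreal
    have h1 : (‖∫ y, h (φ (x, y)) ∂ρ‖₊ : ℝ≥0∞) ≤ ∫⁻ y, (‖h (φ (x, y))‖₊ : ℝ≥0∞) ∂ρ :=
      by simpa only [enorm_eq_nnnorm] using
        enorm_integral_le_lintegral_enorm (μ := ρ) (fun y => h (φ (x, y)))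
    have h2 : ∫⁻ y, (‖h (φ (x, y))‖₊ : ℝ≥0∞) ∂ρ
        ≤ (∫⁻ y, (‖h (φ (x, y))‖₊ : ℝ≥0∞) ^ (2 : ℝ) ∂ρ) ^ (1/2 : ℝ) := by
      calc ∫⁻ y, (‖h (φ (x, y))‖₊ : ℝ≥0∞) ∂ρ
          = ∫⁻ y, ((fun y => (‖h (φ (x, y))‖₊ : ℝ≥0∞)) * (fun _ : α => (1:ℝ≥0∞))) y ∂ρ := by
            simp
        _ ≤ (∫⁻ y, (‖h (φ (x, y))‖₊ : ℝ≥0∞) ^ (2:ℝ) ∂ρ) ^ (1/2:ℝ)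
            * (∫⁻ _y, (1:ℝ≥0∞) ^ (2:ℝ) ∂ρ) ^ (1/2:ℝ) :=
            ENNReal.lintegral_mul_le_Lp_mul_Lq ρ hconj hWm.aemeasurable aemeasurable_const
        _ = (∫⁻ y, (‖h (φ (x, y))‖₊ : ℝ≥0∞) ^ (2:ℝ) ∂ρ) ^ (1/2:ℝ) := by
            simp [ENNReal.one_rpow]
    calc (‖∫ y, h (φ (x, y)) ∂ρ‖₊ : ℝ≥0∞) ^ (2 : ℝ)
        ≤ ((∫⁻ y, (‖h (φ (x, y))‖₊ : ℝ≥0∞) ^ (2 : ℝ) ∂ρ) ^ (1/2 : ℝ)) ^ (2 : ℝ) :=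
          ENNReal.rpow_le_rpow (h1.trans h2) (by norm_num)
      _ = ∫⁻ y, (‖h (φ (x, y))‖₊ : ℝ≥0∞) ^ (2 : ℝ) ∂ρ := by
          rw [← ENNReal.rpow_mul]
          norm_num
  have key : ∫⁻ x, (‖∫ y, h (φ (x, y)) ∂ρ‖₊ : ℝ≥0∞) ^ (2 : ℝ) ∂ρ
      ≤ ∫⁻ z, (‖h z‖₊ : ℝ≥0∞) ^ (2 : ℝ) ∂ρ := by
    calc ∫⁻ x, (‖∫ y, h (φ (x, y)) ∂ρ‖₊ : ℝ≥0∞) ^ (2 : ℝ) ∂ρ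
        ≤ ∫⁻ x, ∫⁻ y, (‖h (φ (x, y))‖₊ : ℝ≥0∞) ^ (2 : ℝ) ∂ρ ∂ρ := lintegral_mono step1
      _ = ∫⁻ q, (‖h (φ q)‖₊ : ℝ≥0∞) ^ (2 : ℝ) ∂(ρ.prod ρ) :=
          (lintegral_prod _ hFm2.aemeasurable).symm
      _ = ∫⁻ z, (‖h z‖₊ : ℝ≥0∞) ^ (2 : ℝ) ∂ρ :=
          hφ.lintegral_comp (hm.nnnorm.coe_nnreal_ennreal.pow measurable_const)
  have hfin : ∫⁻ z, (‖h z‖₊ : ℝ≥0∞) ^ (2 : ℝ) ∂ρ < ⊤ := by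
    have h1 := hL2.2
    rw [eLpNorm_eq_lintegral_rpow_enorm_toReal two_ne_zero ENNReal.ofNat_ne_top, htr] at h1
    simp only [enorm_eq_nnnorm] at h1
    exact (ENNReal.rpow_lt_top_iff_of_pos (by norm_num : (0:ℝ) < 1/2)).1 h1
  exact ENNReal.rpow_lt_top_of_nonneg (by norm_num) (key.trans_lt hfin).ne

/-- If `E[A | m] = 0` a.e. and `B` is `m`-measurable, both in `L²`, then
`A·B` is integrable with zero integral. -/
lemma integral_mul_eq_zero_of_condexp {Ω : Type*} [inst : MeasurableSpace Ω] {P : Measure Ω}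
    [IsProbabilityMeasure P] {m : MeasurableSpace Ω} (hm : m ≤ inst)
    {A B : Ω → ℝ} (hA : MemLp A 2 P) (hB : MemLp B 2 P)
    (hBsm : StronglyMeasurable[m] B) (hcond : P[A|m] =ᵐ[P] 0) :
    Integrable (fun ω => A ω * B ω) P ∧ ∫ ω, A ω * B ω ∂P = 0 := by
  haveI : SigmaFinite (P.trim hm) := (isFiniteMeasure_trim hm).toSigmaFinite
  have hBA : Integrable (B * A) P := by
    have hpqr : (1:ℝ≥0∞)/1 = 1/2 + 1/2 := by
      rw [ENNReal.div_add_div_same, one_add_one_eq_two,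
        ENNReal.div_self two_ne_zero ENNReal.ofNat_ne_top, div_one]
    have h := MemLp.smul (p := 2) (q := 2) (r := 1) hA hB
    exact memLp_one_iff_integrable.1 h
  have hAint : Integrable A P := hA.integrable one_le_two
  constructor
  · exact hBA.congr (Filter.Eventually.of_forall fun ω => by
      simp [Pi.mul_apply, mul_comm])
  · have hstep : ∫ ω, A ω * B ω ∂P = ∫ ω, (B * A) ω ∂P := by
      refine integral_congr_ae (Filter.Eventually.of_forall fun ω => ?_)
      simp [mul_comm]
    rw [hstep, ← integral_condExp hm]
    have hmul := condExp_mul_of_stronglyMeasurable_left hBsm hBA hAint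
    have hzero : B * P[A|m] =ᵐ[P] 0 := by
      filter_upwards [hcond] with ω h
      simp [h]
    rw [integral_congr_ae (hmul.trans hzero)]
    simp

end Stmt15Aux

/-- uniqueness of the generalized Hoeffding decomposition: two decompositions
of the same function into hierarchically orthogonal square-integrable components (indexed by
the subsets of S) coincide almost surely, when X has a density on [0,1]^p bounded between
positive constants. -/
theorem stmt15 {Ω : Type*} [MeasurableSpace Ω] (P : Measure Ω) [IsProbabilityMeasure P]
    (p : ℕ) (X : Ω → (Fin p → ℝ)) (hX : Measurable X)
    (f : (Fin p → ℝ) → ℝ) (c₁ c₂ : ℝ) (hc₁ : 0 < c₁) (hc₁₂ : c₁ ≤ c₂)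
    (hdens : Measure.map X P = volume.withDensity (fun x => ENNReal.ofReal (f x)))
    (hfb : ∀ x ∈ Set.Icc (0 : Fin p → ℝ) 1, c₁ ≤ f x ∧ f x ≤ c₂)
    (hfout : ∀ x ∉ Set.Icc (0 : Fin p → ℝ) 1, f x = 0)
    (S : Finset (Fin p))
    (ν μ : Finset (Fin p) → (Fin p → ℝ) → ℝ)
    (hνm : ∀ J, Measurable (ν J)) (hμm : ∀ J, Measurable (μ J))
    (hνL2 : ∀ J, MemLp (fun ω => ν J (X ω)) 2 P)
    (hμL2 : ∀ J, MemLp (fun ω => μ J (X ω)) 2 P)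
    (hνdep : ∀ J ∈ S.powerset, ∀ x y : Fin p → ℝ, (∀ i ∈ J, x i = y i) → ν J x = ν J y)
    (hμdep : ∀ J ∈ S.powerset, ∀ x y : Fin p → ℝ, (∀ i ∈ J, x i = y i) → μ J x = μ J y)
    (hdecomp : ∀ᵐ ω ∂P,
      ∑ J ∈ S.powerset, ν J (X ω) = ∑ J ∈ S.powerset, μ J (X ω))
    (hνorth : ∀ J ∈ S.powerset, ∀ I : Finset (Fin p), I ⊂ J →
      P[(fun ω => ν J (X ω)) |
        MeasurableSpace.comap (fun ω (i : I) => X ω i) inferInstance] =ᵐ[P] 0)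
    (hμorth : ∀ J ∈ S.powerset, ∀ I : Finset (Fin p), I ⊂ J →
      P[(fun ω => μ J (X ω)) |
        MeasurableSpace.comap (fun ω (i : I) => X ω i) inferInstance] =ᵐ[P] 0) :
    ∀ J ∈ S.powerset, (fun ω => ν J (X ω)) =ᵐ[P] (fun ω => μ J (X ω)) := by
  classical
  set ρ : Measure (Fin p → ℝ) := Stmt15Aux.rho p with hρdef
  haveI hρprob : IsProbabilityMeasure ρ := by rw [hρdef]; infer_instance
  have hcubem : MeasurableSet (Set.Icc (0 : Fin p → ℝ) 1) := measurableSet_Icc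
  set d : Finset (Fin p) → (Fin p → ℝ) → ℝ := fun J x => ν J x - μ J x with hd
  have hdm : ∀ J, Measurable (d J) := fun J => (hνm J).sub (hμm J)
  have hQs : ∀ s : Set (Fin p → ℝ), MeasurableSet s →
      (Measure.map X P) s = ∫⁻ x in s, ENNReal.ofReal (f x) ∂volume := fun s hs => by
    rw [hdens, withDensity_apply _ hs]
  have hρs : ∀ s : Set (Fin p → ℝ), MeasurableSet s →
      ρ s = volume (s ∩ Set.Icc (0 : Fin p → ℝ) 1) := fun s hs => by
    rw [hρdef, Stmt15Aux.rho_eq_restrict, Measure.restrict_apply hs]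
  have hupper : ∀ s : Set (Fin p → ℝ), MeasurableSet s →
      (Measure.map X P) s ≤ ENNReal.ofReal c₂ * ρ s := by
    intro s hs
    rw [hQs s hs, hρs s hs]
    calc ∫⁻ x in s, ENNReal.ofReal (f x) ∂volume
        ≤ ∫⁻ x in s, (Set.Icc (0 : Fin p → ℝ) 1).indicator
            (fun _ => ENNReal.ofReal c₂) x ∂volume := by
          refine lintegral_mono fun x => ?_
          by_cases hx : x ∈ Set.Icc (0 : Fin p → ℝ) 1
          · simpa [Set.indicator_of_mem hx] using ENNReal.ofReal_le_ofReal (hfb x hx).2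
          · simp [Set.indicator_of_notMem hx, hfout x hx]
      _ = ENNReal.ofReal c₂ * volume (s ∩ Set.Icc (0 : Fin p → ℝ) 1) := by
          rw [lintegral_indicator hcubem, setLIntegral_const,
            Measure.restrict_apply hcubem, Set.inter_comm]
  have hlower : ∀ s : Set (Fin p → ℝ), MeasurableSet s →
      ENNReal.ofReal c₁ * ρ s ≤ (Measure.map X P) s := by
    intro s hs
    rw [hQs s hs, hρs s hs]
    calc ENNReal.ofReal c₁ * volume (s ∩ Set.Icc (0 : Fin p → ℝ) 1)
        = ∫⁻ x in s, (Set.Icc (0 : Fin p → ℝ) 1).indicator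
            (fun _ => ENNReal.ofReal c₁) x ∂volume := by
          rw [lintegral_indicator hcubem, setLIntegral_const,
            Measure.restrict_apply hcubem, Set.inter_comm]
      _ ≤ ∫⁻ x in s, ENNReal.ofReal (f x) ∂volume := by
          refine lintegral_mono fun x => ?_
          by_cases hx : x ∈ Set.Icc (0 : Fin p → ℝ) 1
          · simpa [Set.indicator_of_mem hx] using ENNReal.ofReal_le_ofReal (hfb x hx).1
          · simp [Set.indicator_of_notMem hx]
  have hc₁0 : ENNReal.ofReal c₁ ≠ 0 := (ENNReal.ofReal_pos.2 hc₁).ne'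
  have hQρ : Measure.map X P ≪ ρ :=
    Measure.AbsolutelyContinuous.mk fun s hs h0 =>
      le_antisymm (by simpa [h0] using hupper s hs) zero_le
  have hρQ : ρ ≪ Measure.map X P := by
    refine Measure.AbsolutelyContinuous.mk fun s hs h0 => ?_
    have h1 : ENNReal.ofReal c₁ * ρ s = 0 :=
      le_antisymm (h0 ▸ hlower s hs) zero_le
    rcases mul_eq_zero.1 h1 with h | h
    · exact absurd h hc₁0
    · exact h
  have haeiff : ∀ q : (Fin p → ℝ) → Prop, MeasurableSet {x | q x} →
      ((∀ᵐ x ∂ρ, q x) ↔ ∀ᵐ ω ∂P, q (X ω)) := by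
    intro q hq
    rw [← MeasureTheory.ae_map_iff hX.aemeasurable hq]
    exact ⟨fun h => hQρ.ae_le h, fun h => hρQ.ae_le h⟩
  have hmemρ : ∀ g : (Fin p → ℝ) → ℝ, Measurable g →
      MemLp (fun ω => g (X ω)) 2 P → MemLp g 2 ρ := by
    intro g hg h
    have h1 : MemLp g 2 (Measure.map X P) :=
      (memLp_map_measure_iff hg.aestronglyMeasurable hX.aemeasurable).2 h
    have h2 : MemLp g 2 ((ENNReal.ofReal c₁)⁻¹ • Measure.map X P) :=
      h1.smul_measure (by simp [hc₁0])
    refine h2.mono_measure ?_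
    rw [Measure.le_iff]
    intro s hs
    calc ρ s = (ENNReal.ofReal c₁)⁻¹ * (ENNReal.ofReal c₁ * ρ s) := by
          rw [← mul_assoc, ENNReal.inv_mul_cancel hc₁0 ENNReal.ofReal_ne_top, one_mul]
      _ ≤ (ENNReal.ofReal c₁)⁻¹ * (Measure.map X P) s := mul_le_mul_right (hlower s hs) _
      _ = ((ENNReal.ofReal c₁)⁻¹ • Measure.map X P) s := by
          simp [Measure.smul_apply, smul_eq_mul]
  have hmemP : ∀ g : (Fin p → ℝ) → ℝ, Measurable g →
      MemLp g 2 ρ → MemLp (fun ω => g (X ω)) 2 P := by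
    intro g hg h
    have h2 : MemLp g 2 (ENNReal.ofReal c₂ • ρ) := h.smul_measure ENNReal.ofReal_ne_top
    have h1 : MemLp g 2 (Measure.map X P) := by
      refine h2.mono_measure ?_
      rw [Measure.le_iff]
      intro s hs
      simpa [Measure.smul_apply, smul_eq_mul] using hupper s hs
    exact (memLp_map_measure_iff hg.aestronglyMeasurable hX.aemeasurable).1 h1
  have hdL2 : ∀ J', MemLp (fun ω => d J' (X ω)) 2 P := fun J' => (hνL2 J').sub (hμL2 J')
  have hddep : ∀ J' ∈ S.powerset, ∀ x y : Fin p → ℝ,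
      (∀ i ∈ J', x i = y i) → d J' x = d J' y := by
    intro J' hJ' x y h
    simp only [hd]
    rw [hνdep J' hJ' x y h, hμdep J' hJ' x y h]
  have main : ∀ J ∈ S.powerset,
      (∀ J' ∈ S.powerset, J.card < J'.card → d J' =ᵐ[ρ] 0) → d J =ᵐ[ρ] 0 := by
    intro J hJmem IH
    -- Step A: the full sum vanishes ρ-a.e.
    have hsum_meas : MeasurableSet {x : Fin p → ℝ | ∑ J' ∈ S.powerset, d J' x = 0} := by
      have hm1 : Measurable fun x => ∑ J' ∈ S.powerset, d J' x :=
        Finset.measurable_sum _ fun J' _ => hdm J'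
      exact hm1 (measurableSet_singleton 0)
    have hA : ∀ᵐ x ∂ρ, ∑ J' ∈ S.powerset, d J' x = 0 := by
      refine (haeiff _ hsum_meas).2 ?_
      filter_upwards [hdecomp] with ω h
      simp only [hd]
      rw [Finset.sum_sub_distrib]
      exact sub_eq_zero.2 h
    -- the index set of "small" other subsets
    set T : Finset (Finset (Fin p)) :=
      (S.powerset.erase J).filter (fun J' => J'.card ≤ J.card) with hT
    have hTsub : ∀ J' ∈ T, J' ∈ S.powerset ∧ J ∩ J' ⊂ J := by
      intro J' hJ'
      rw [hT, Finset.mem_filter, Finset.mem_erase] at hJ'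
      obtain ⟨⟨hne, hmem⟩, hcard⟩ := hJ'
      refine ⟨hmem, ?_⟩
      have hnsub : ¬ J ⊆ J' := fun hsub => hne (Finset.eq_of_subset_of_card_le hsub hcard).symm
      refine Finset.ssubset_iff_subset_ne.2 ⟨Finset.inter_subset_left, fun h => ?_⟩
      exact hnsub (by rw [← h]; exact Finset.inter_subset_right)
    -- Step B: kill large sets by IH
    have hbig : ∀ᵐ x ∂ρ, ∀ J' ∈ (S.powerset.erase J).filter (fun J' => ¬ J'.card ≤ J.card),
        d J' x = 0 := by
      rw [Filter.eventually_all_finset]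
      intro J' hJ'
      rw [Finset.mem_filter, Finset.mem_erase] at hJ'
      exact (IH J' hJ'.1.2 (not_le.1 hJ'.2)).mono fun x hx => by simpa using hx
    have hB : ∀ᵐ x ∂ρ, d J x = -∑ J' ∈ T, d J' x := by
      filter_upwards [hA, hbig] with x hx hbx
      have h1 : ∑ J' ∈ S.powerset, d J' x
          = d J x + ∑ J' ∈ S.powerset.erase J, d J' x :=
        (Finset.add_sum_erase _ _ hJmem).symm
      have h2 : ∑ J' ∈ S.powerset.erase J, d J' x
          = ∑ J' ∈ T, d J' x
            + ∑ J' ∈ (S.powerset.erase J).filter (fun J' => ¬ J'.card ≤ J.card), d J' x := by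
        rw [hT]
        exact (Finset.sum_filter_add_sum_filter_not _ _ _).symm
      have h3 : ∑ J' ∈ (S.powerset.erase J).filter (fun J' => ¬ J'.card ≤ J.card), d J' x = 0 :=
        Finset.sum_eq_zero fun J' hJ' => hbx J' hJ'
      rw [h1, h2, h3, add_zero] at hx
      linarith
    -- patch setup
    have hφ : MeasurePreserving (Stmt15Aux.patch J) (ρ.prod ρ) ρ :=
      Stmt15Aux.measurePreserving_patch (p := p) J
    set φ : (Fin p → ℝ) × (Fin p → ℝ) → (Fin p → ℝ) := Stmt15Aux.patch J with hφdef
    have hφm : Measurable φ := Stmt15Aux.measurable_patch J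
    have hφJ : ∀ (x y : Fin p → ℝ) i, i ∈ J → φ (x, y) i = x i := by
      intro x y i hi; simp [hφdef, Stmt15Aux.patch, hi]
    have hφJ' : ∀ (x y : Fin p → ℝ) i, i ∉ J → φ (x, y) i = y i := by
      intro x y i hi; simp [hφdef, Stmt15Aux.patch, hi]
    set c : Finset (Fin p) → (Fin p → ℝ) → ℝ := fun J' x => ∫ y, d J' (φ (x, y)) ∂ρ with hcdef
    have hmemρd : ∀ J', MemLp (d J') 2 ρ := fun J' => hmemρ _ (hdm J') (hdL2 J')
    have hintd : ∀ J', Integrable (d J') ρ := fun J' => (hmemρd J').integrable one_le_two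
    have hFint : ∀ J', Integrable (fun q => d J' (φ q)) (ρ.prod ρ) := fun J' =>
      (hφ.integrable_comp (hdm J').aestronglyMeasurable).2 (hintd J')
    have hcm : ∀ J', StronglyMeasurable (c J') := fun J' =>
      ((hdm J').comp hφm).stronglyMeasurable.integral_prod_right'
    have hcdep : ∀ J' ∈ S.powerset, ∀ x x' : Fin p → ℝ,
        (∀ i ∈ J ∩ J', x i = x' i) → c J' x = c J' x' := by
      intro J' hJ' x x' hxx
      simp only [hcdef]
      refine integral_congr_ae (Filter.Eventually.of_forall fun y => ?_)
      refine hddep J' hJ' _ _ fun i hi => ?_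
      by_cases hiJ : i ∈ J
      · rw [hφJ _ _ _ hiJ, hφJ _ _ _ hiJ]
        exact hxx i (Finset.mem_inter.2 ⟨hiJ, hi⟩)
      · rw [hφJ' _ _ _ hiJ, hφJ' _ _ _ hiJ]
    -- Step D: d J = -∑ c J'  (ρ-a.e.)
    set g : (Fin p → ℝ) → ℝ := fun x => -∑ J' ∈ T, d J' x with hgdef
    have hBg : d J =ᵐ[ρ] g := hB
    have hcomp : (fun q => d J (φ q)) =ᵐ[ρ.prod ρ] fun q => g (φ q) :=
      hφ.quasiMeasurePreserving.ae_eq_comp hBg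
    have hae2 : ∀ᵐ x ∂ρ, (fun y => d J (φ (x, y))) =ᵐ[ρ] fun y => g (φ (x, y)) :=
      Measure.ae_ae_of_ae_prod hcomp
    have hyint : ∀ᵐ x ∂ρ, ∀ J' ∈ T, Integrable (fun y => d J' (φ (x, y))) ρ := by
      rw [Filter.eventually_all_finset]
      intro J' _
      exact (hFint J').prod_right_ae
    have hD : ∀ᵐ x ∂ρ, d J x = -∑ J' ∈ T, c J' x := by
      filter_upwards [hae2, hyint] with x hx hint
      have e1 : d J x = ∫ y, d J (φ (x, y)) ∂ρ := by
        have e0 : ∀ y : Fin p → ℝ, d J (φ (x, y)) = d J x := fun y =>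
          hddep J hJmem _ _ fun i hi => hφJ x y i hi
        simp [e0]
      rw [e1, integral_congr_ae hx]
      have e2 : (fun y : Fin p → ℝ => g (φ (x, y)))
          = fun y => -∑ J' ∈ T, d J' (φ (x, y)) := rfl
      rw [e2, integral_neg, integral_finset_sum T fun J' hJ' => hint J' hJ']
    -- transfer to P
    have hDmeas : MeasurableSet {x : Fin p → ℝ | d J x = -∑ J' ∈ T, c J' x} := by
      refine measurableSet_eq_fun (hdm J) ?_
      exact (Finset.measurable_sum _ fun J' _ => (hcm J').measurable).neg
    have hDP : ∀ᵐ ω ∂P, d J (X ω) = -∑ J' ∈ T, c J' (X ω) := (haeiff _ hDmeas).1 hD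
    -- L² bound for c J'
    have hcL2 : ∀ J', MemLp (c J') 2 ρ := fun J' =>
      Stmt15Aux.memLp_two_partial_integral hφ (hdm J') (hmemρd J')
    -- Step E: each pairing vanishes
    have hpair : ∀ J' ∈ T, Integrable (fun ω => d J (X ω) * c J' (X ω)) P ∧
        ∫ ω, d J (X ω) * c J' (X ω) ∂P = 0 := by
      intro J' hJ'T
      obtain ⟨hJ'mem, hKss⟩ := hTsub J' hJ'T
      have hm : MeasurableSpace.comap
          (fun ω (i : (J ∩ J' : Finset (Fin p))) => X ω i) inferInstance
          ≤ ‹MeasurableSpace Ω› :=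
        measurable_iff_comap_le.1
          (measurable_pi_lambda _ fun i => (measurable_pi_apply (i : Fin p)).comp hX)
      set C : ((J ∩ J' : Finset (Fin p)) → ℝ) → ℝ :=
        fun z => c J' (fun i => if h : i ∈ J ∩ J' then z ⟨i, h⟩ else 0) with hC
      have hCm : Measurable C := by
        refine (hcm J').measurable.comp ?_
        refine measurable_pi_lambda _ fun i => ?_
        by_cases hi : i ∈ J ∩ J'
        · simpa [hi] using measurable_pi_apply (⟨i, hi⟩ : (J ∩ J' : Finset (Fin p)))
        · simpa [hi] using measurable_const
      have hBC : ∀ ω, c J' (X ω) = C (fun i : (J ∩ J' : Finset (Fin p)) => X ω i) := by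
        intro ω
        rw [hC]
        refine hcdep J' hJ'mem _ _ fun i hi => ?_
        simp [hi]
      have hBm : Measurable[MeasurableSpace.comap
          (fun ω (i : (J ∩ J' : Finset (Fin p))) => X ω i) inferInstance]
          fun ω => c J' (X ω) := by
        have hproj : Measurable[MeasurableSpace.comap
            (fun ω (i : (J ∩ J' : Finset (Fin p))) => X ω i) inferInstance]
            fun ω => (fun i : (J ∩ J' : Finset (Fin p)) => X ω i) :=
          measurable_iff_comap_le.2 le_rfl
        have h2 := hCm.comp hproj
        exact (funext hBC :
          (fun ω => c J' (X ω)) = fun ω => C (fun i : (J ∩ J' : Finset (Fin p)) => X ω i)) ▸ h2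
      have hBsm : StronglyMeasurable[MeasurableSpace.comap
          (fun ω (i : (J ∩ J' : Finset (Fin p))) => X ω i) inferInstance]
          fun ω => c J' (X ω) := hBm.stronglyMeasurable
      have hBL2 : MemLp (fun ω => c J' (X ω)) 2 P := hmemP _ (hcm J').measurable (hcL2 J')
      have hcondA : P[(fun ω => d J (X ω)) | MeasurableSpace.comap
          (fun ω (i : (J ∩ J' : Finset (Fin p))) => X ω i) inferInstance] =ᵐ[P] 0 := by
        have hsplit : (fun ω => d J (X ω))
            = (fun ω => ν J (X ω)) - fun ω => μ J (X ω) := rfl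
        rw [hsplit]
        have h1 := hνorth J hJmem (J ∩ J') hKss
        have h2 := hμorth J hJmem (J ∩ J') hKss
        refine (condExp_sub ((hνL2 J).integrable one_le_two)
          ((hμL2 J).integrable one_le_two) _).trans ?_
        filter_upwards [h1, h2] with ω e1 e2
        simp [e1, e2]
      exact Stmt15Aux.integral_mul_eq_zero_of_condexp hm (hdL2 J) hBL2 hBsm hcondA
    -- Step F: conclude ∫ (d J ∘ X)² = 0 and finish
    have hAsq : ∫ ω, d J (X ω) * d J (X ω) ∂P = 0 := by
      have hmulint : ∀ J' ∈ T, Integrable (fun ω => d J (X ω) * c J' (X ω)) P :=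
        fun J' hJ' => (hpair J' hJ').1
      have h1 : ∫ ω, d J (X ω) * d J (X ω) ∂P
          = ∫ ω, d J (X ω) * (-∑ J' ∈ T, c J' (X ω)) ∂P := by
        refine integral_congr_ae ?_
        filter_upwards [hDP] with ω h
        rw [← h]
      rw [h1]
      have h2 : (fun ω => d J (X ω) * (-∑ J' ∈ T, c J' (X ω)))
          = fun ω => -∑ J' ∈ T, d J (X ω) * c J' (X ω) := by
        funext ω
        rw [mul_neg, Finset.mul_sum]
      rw [h2, integral_neg, integral_finset_sum T hmulint]
      simp only [neg_eq_zero]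
      exact Finset.sum_eq_zero fun J' hJ' => (hpair J' hJ').2
    have hsqint : Integrable (fun ω => d J (X ω) * d J (X ω)) P := by
      have h := (hdL2 J).integrable_sq
      exact h.congr (Filter.Eventually.of_forall fun ω => by ring_nf)
    have hzero : (fun ω => d J (X ω) * d J (X ω)) =ᵐ[P] 0 := by
      refine (integral_eq_zero_iff_of_nonneg ?_ hsqint).1 hAsq
      intro ω
      exact mul_self_nonneg _
    have hzP : ∀ᵐ ω ∂P, d J (X ω) = 0 := by
      filter_upwards [hzero] with ω h
      have h' : d J (X ω) * d J (X ω) = 0 := h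
      exact mul_self_eq_zero.1 h'
    have hzmeas : MeasurableSet {x : Fin p → ℝ | d J x = 0} :=
      measurableSet_eq_fun (hdm J) measurable_const
    exact ((haeiff _ hzmeas).2 hzP).mono fun x hx => by simpa using hx
  have all0 : ∀ n : ℕ, ∀ J ∈ S.powerset, S.card - J.card ≤ n → d J =ᵐ[ρ] 0 := by
    intro n
    induction n with
    | zero =>
      intro J hJ hn
      refine main J hJ fun J' hJ' hcard => absurd hcard ?_
      have h1 : J'.card ≤ S.card := Finset.card_le_card (Finset.mem_powerset.1 hJ')
      omega
    | succ n ih =>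
      intro J hJ hn
      refine main J hJ fun J' hJ' hcard => ?_
      have h1 : J'.card ≤ S.card := Finset.card_le_card (Finset.mem_powerset.1 hJ')
      exact ih J' hJ' (by omega)
  intro J hJ
  have h0 : d J =ᵐ[ρ] 0 := all0 S.card J hJ (Nat.sub_le _ _)
  have hzm : MeasurableSet {x : Fin p → ℝ | d J x = 0} :=
    measurableSet_eq_fun (hdm J) measurable_const
  have hz : ∀ᵐ ω ∂P, d J (X ω) = 0 :=
    (haeiff _ hzm).1 (h0.mono fun x hx => by simpa using hx)
  filter_upwards [hz] with ω h
  have h' : ν J (X ω) - μ J (X ω) = 0 := h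
  linarith
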